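/- Let H(s) ∈ F[s]^{m×n} be a matrix pencil over an algebraically closed field F with Weyr characteristic (W, r_*, s_*), and for λ ∈ F ∪ {∞} let z_1(λ) = #{i ≥ 1 : w_i(λ) ≥ 1}. Let r_*^1 be a partition. There exist pencils H_1(s) ∈ F[s]^{(m−1)×n} and h(s) ∈ F[s]^{1×n} with H(s) strictly equivalent to stacking h(s) on H_1(s), rank(H_1(s)) = rank(H(s)) − 1, and r_*^1 the column Brunovsky partition of H_1(s), if and only if r_* is conjugate-majorized by r_*^1 and 0 ≤ |r^1| − |r| + 1 ≤ Σ_λ z_1(λ). -/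

import Mathlib

/-- An infinite weakly decreasing sequence of nonnegative integers, almost all zero. -/
def IsPartition (p : ℕ → ℕ) : Prop :=
  (∀ i j, i ≤ j → p j ≤ p i) ∧ ∃ N, ∀ i, N ≤ i → p i = 0

/-- `conjPart p k` is the `(k+1)`-st entry of the conjugate partition of `p`,
where `p i` denotes the `(i+1)`-st entry of `p`; i.e. `#{i : p_i ≥ k+1}`. -/
noncomputable def conjPart (p : ℕ → ℕ) (k : ℕ) : ℕ :=
  Nat.card {i : ℕ | k + 1 ≤ p i}

/-- Sum of all entries of an (almost all zero) sequence. -/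
noncomputable def psum (p : ℕ → ℕ) : ℕ := ∑ᶠ i, p i

/-- The tail `(p_1, p_2, …)` of a starred partition `p_* = (p_0, p_1, …)`. -/
def ptail (p : ℕ → ℕ) : ℕ → ℕ := fun i => p (i + 1)

/-- `CMaj s r` : the starred partition `s_*` is conjugate-majorized by `r_*`
(written `s_* ∠ r_*`): `r_0 = s_0 + 1` and `r_i = s_i + 1` for all
`0 ≤ i ≤ g`, where `g = max {i : r_i > s_i}`. -/
def CMaj (s r : ℕ → ℕ) : Prop :=
  r 0 = s 0 + 1 ∧ ∀ i ≤ sSup {j | s j < r j}, r i = s i + 1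

/-- Weyr data at each eigenvalue: a partition for every `λ` in the extended
field, nonzero for only finitely many `λ`. -/
def IsEigPartitions {Λ : Type*} (w : Λ → ℕ → ℕ) : Prop :=
  (∀ l, IsPartition (w l)) ∧ (Function.support w).Finite

/-- `|W|`: total sum over all eigenvalues of all entries of `w(λ)`. -/
noncomputable def wsum {Λ : Type*} (w : Λ → ℕ → ℕ) : ℕ := ∑ᶠ l, ∑ᶠ i, w l i

section Helpers

lemma finsum_le_finsum_aux {α : Type*} {f g : α → ℕ} (h : ∀ a, f a ≤ g a)
    (hg : (Function.support g).Finite) : ∑ᶠ a, f a ≤ ∑ᶠ a, g a := by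
  have hsub : Function.support f ⊆ (hg.toFinset : Set α) := by
    rw [Set.Finite.coe_toFinset]
    intro a ha
    simp only [Function.mem_support] at *
    exact fun h0 => ha (Nat.le_zero.mp (h0 ▸ h a))
  rw [finsum_eq_finset_sum_of_support_subset f hsub,
      finsum_eq_finset_sum_of_support_subset g hg.coe_toFinset.symm.subset]
  exact Finset.sum_le_sum fun a _ => h a

lemma part_pos_iff {p : ℕ → ℕ} (hp : IsPartition p) (i : ℕ) :
    1 ≤ p i ↔ i < conjPart p 0 := by
  obtain ⟨hmono, N, hN⟩ := hp
  have hS : {j : ℕ | 1 ≤ p j}.Finite := by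
    apply (Set.finite_Iio N).subset
    intro j hj
    simp only [Set.mem_setOf_eq] at hj
    simp only [Set.mem_Iio]
    by_contra hjN
    have := hN j (by omega)
    omega
  have hc : conjPart p 0 = {j : ℕ | 1 ≤ p j}.ncard := by
    simp only [conjPart, zero_add, Nat.card_coe_set_eq]
  constructor
  · intro hpi
    have hsub : Set.Iic i ⊆ {j : ℕ | 1 ≤ p j} := by
      intro j hj
      exact le_trans hpi (hmono j i hj)
    have h2 := Set.ncard_le_ncard hsub hS
    have hIic : (Set.Iic i).ncard = i + 1 := by
      rw [← Finset.coe_Iic, Set.ncard_coe_finset, Nat.card_Iic]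
    omega
  · intro hlt
    by_contra hpi
    have hp0 : p i = 0 := by omega
    have hsub : {j : ℕ | 1 ≤ p j} ⊆ Set.Iio i := by
      intro j hj
      simp only [Set.mem_setOf_eq] at hj
      simp only [Set.mem_Iio]
      by_contra hij
      have := hmono i j (by omega)
      omega
    have h2 := Set.ncard_le_ncard hsub (Set.finite_Iio i)
    have hIio : (Set.Iio i).ncard = i := by
      rw [← Finset.coe_Iio, Set.ncard_coe_finset, Nat.card_Iio]
    omega

lemma finsum_eq_range {p : ℕ → ℕ} {N : ℕ} (h : ∀ i, N ≤ i → p i = 0) :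
    ∑ᶠ i, p i = ∑ i ∈ Finset.range N, p i := by
  apply finsum_eq_finset_sum_of_support_subset
  intro i hi
  simp only [Finset.coe_range, Set.mem_Iio]
  by_contra hiN
  exact hi (h i (by omega))

lemma sum_ind {N z dl : ℕ} (hz : z ≤ N) (hdl : dl ≤ z) :
    ∑ i ∈ Finset.range N, (if z - dl ≤ i ∧ i < z then 1 else 0) = dl := by
  have h1 : ∀ i ∈ Finset.range N, (if z - dl ≤ i ∧ i < z then 1 else 0) =
      (if i ∈ Finset.Ico (z - dl) z then 1 else 0) := by
    intro i _
    simp [Finset.mem_Ico]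
  have h2 : Finset.Ico (z - dl) z ⊆ Finset.range N := by
    intro i hi
    simp only [Finset.mem_Ico] at hi
    simp only [Finset.mem_range]
    omega
  rw [Finset.sum_congr rfl h1, Finset.sum_ite_mem, Finset.inter_eq_right.mpr h2,
      Finset.sum_const, smul_eq_mul, mul_one, Nat.card_Ico]
  omega

lemma decrement {p : ℕ → ℕ} (hp : IsPartition p) {dl : ℕ} (hdl : dl ≤ conjPart p 0) :
    IsPartition (fun i => if conjPart p 0 - dl ≤ i then p i - 1 else p i) ∧
    (∀ i, (if conjPart p 0 - dl ≤ i then p i - 1 else p i) ≤ p i ∧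
      p i ≤ (if conjPart p 0 - dl ≤ i then p i - 1 else p i) + 1) ∧
    ∑ᶠ i, p i = (∑ᶠ i, if conjPart p 0 - dl ≤ i then p i - 1 else p i) + dl := by
  obtain ⟨hmono, N, hN⟩ := hp
  have hpp := part_pos_iff ⟨hmono, N, hN⟩
  set z := conjPart p 0 with hzdef
  have hzN : z ≤ N := by
    by_contra hzN
    have h1 : 1 ≤ p N := (hpp N).mpr (by omega)
    have := hN N le_rfl
    omega
  have hqmono : ∀ i j, i ≤ j →
      (if z - dl ≤ j then p j - 1 else p j) ≤ (if z - dl ≤ i then p i - 1 else p i) := by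
    intro i j hij
    have hp1 := hmono i j hij
    by_cases h1 : z - dl ≤ i
    · have h2 : z - dl ≤ j := by omega
      simp only [h1, h2, if_true]
      omega
    · by_cases h2 : z - dl ≤ j <;> simp only [h1, h2, if_true, if_false] <;> omega
  have hq0 : ∀ i, N ≤ i → (if z - dl ≤ i then p i - 1 else p i) = 0 := by
    intro i hi
    have := hN i hi
    split <;> omega
  refine ⟨⟨hqmono, N, hq0⟩, ?_, ?_⟩
  · intro i
    by_cases h1 : z - dl ≤ i
    · simp only [h1, if_true]
      rcases Nat.lt_or_ge i z with hiz | hiz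
      · have := (hpp i).mpr hiz; omega
      · have : ¬ (1 ≤ p i) := fun h => by have := (hpp i).mp h; omega
        omega
    · simp only [h1, if_false]; omega
  · have key : ∀ i, p i = (if z - dl ≤ i then p i - 1 else p i) +
        (if z - dl ≤ i ∧ i < z then 1 else 0) := by
      intro i
      have h := hpp i
      split_ifs <;> omega
    rw [finsum_eq_range hN, finsum_eq_range hq0,
        Finset.sum_congr rfl (fun i _ => key i), Finset.sum_add_distrib,
        sum_ind hzN hdl]

lemma sandwich_sum {p q : ℕ → ℕ} (hp : IsPartition p) (hq : ∀ i, q i ≤ p i ∧ p i ≤ q i + 1) :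
    (∑ᶠ i, q i) ≤ (∑ᶠ i, p i) ∧ (∑ᶠ i, p i) ≤ (∑ᶠ i, q i) + conjPart p 0 := by
  obtain ⟨hmono, N, hN⟩ := hp
  have hpp := part_pos_iff ⟨hmono, N, hN⟩
  have hzN : conjPart p 0 ≤ N := by
    by_contra hzN
    have h1 : 1 ≤ p N := (hpp N).mpr (by omega)
    have := hN N le_rfl
    omega
  have hq0 : ∀ i, N ≤ i → q i = 0 := fun i hi => by
    have := hN i hi; have := (hq i).1; omega
  rw [finsum_eq_range hN, finsum_eq_range hq0]
  constructor
  · exact Finset.sum_le_sum fun i _ => (hq i).1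
  · calc ∑ i ∈ Finset.range N, p i
        ≤ ∑ i ∈ Finset.range N,
            (q i + if conjPart p 0 - conjPart p 0 ≤ i ∧ i < conjPart p 0 then 1 else 0) := by
          apply Finset.sum_le_sum
          intro i _
          have h := hpp i
          have h2 := (hq i).2
          split_ifs <;> omega
      _ = (∑ i ∈ Finset.range N, q i) + conjPart p 0 := by
          rw [Finset.sum_add_distrib, sum_ind hzN le_rfl]

lemma exists_split {α : Type*} (s : Finset α) (f : α → ℕ) (d : ℕ)
    (hd : d ≤ ∑ a ∈ s, f a) :
    ∃ g : α → ℕ, (∀ a, g a ≤ f a) ∧ (∀ a ∉ s, g a = 0) ∧ ∑ a ∈ s, g a = d := by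
  classical
  induction s using Finset.induction_on generalizing d with
  | empty =>
    simp only [Finset.sum_empty, Nat.le_zero] at hd
    exact ⟨fun _ => 0, fun a => Nat.zero_le _, fun a _ => rfl, by simp [hd]⟩
  | insert a t hnotmem ih =>
    rw [Finset.sum_insert hnotmem] at hd
    obtain ⟨g, hg1, hg2, hg3⟩ := ih (d - min (f a) d) (by omega)
    refine ⟨Function.update g a (min (f a) d), ?_, ?_, ?_⟩
    · intro b
      rcases eq_or_ne b a with rfl | hba
      · simp [Function.update_self]
      · rw [Function.update_of_ne hba]; exact hg1 b
    · intro b hb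
      simp only [Finset.mem_insert, not_or] at hb
      rw [Function.update_of_ne hb.1]
      exact hg2 b hb.2
    · rw [Finset.sum_insert hnotmem, Function.update_self]
      have heq : ∑ b ∈ t, Function.update g a (min (f a) d) b = ∑ b ∈ t, g b := by
        apply Finset.sum_congr rfl
        intro b hb
        exact Function.update_of_ne (fun h : b = a => hnotmem (h ▸ hb)) _ _
      omega

lemma supp_inner {Λ : Type*} (w : Λ → ℕ → ℕ) :
    Function.support (fun l => ∑ᶠ i, w l i) ⊆ Function.support w := by
  intro l hl
  simp only [Function.mem_support] at *
  intro h0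
  apply hl
  rw [h0]
  exact finsum_zero

lemma supp_conj {Λ : Type*} (w : Λ → ℕ → ℕ) (hw : IsEigPartitions w) :
    Function.support (fun l => conjPart (w l) 0) ⊆ Function.support w := by
  intro l hl
  simp only [Function.mem_support] at *
  intro h0
  apply hl
  have h1 : ¬ (0 < conjPart (w l) 0) := by
    intro h
    have := (part_pos_iff (hw.1 l) 0).mpr h
    rw [h0] at this
    simp at this
  omega

end Helpers

theorem prescribed_col_brunovsky_subpencil_rank_drop_iff
    {F : Type*} [Field F] [IsAlgClosed F]
    (w : Option F → ℕ → ℕ) (r r1 s : ℕ → ℕ)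
    (hw : IsEigPartitions w) (hr : IsPartition r) (hr1 : IsPartition r1)
    (hs : IsPartition s) :
    (∃ w1 : Option F → ℕ → ℕ, ∃ s1 : ℕ → ℕ,
        IsEigPartitions w1 ∧ IsPartition s1 ∧
        (∀ l i, w1 l i ≤ w l i ∧ w l i ≤ w1 l i + 1) ∧
        CMaj r r1 ∧ s1 = s ∧
        wsum w + psum (ptail r) + psum (ptail s) =
          wsum w1 + psum (ptail r1) + psum (ptail s1) + 1) ↔
    (CMaj r r1 ∧
     psum (ptail r) ≤ psum (ptail r1) + 1 ∧
     psum (ptail r1) + 1 ≤ psum (ptail r) + ∑ᶠ l, conjPart (w l) 0) := by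
  constructor
  · rintro ⟨w1, s1, hw1, hs1p, hbet, hcm, rfl, heq⟩
    refine ⟨hcm, ?_, ?_⟩ <;>
    · have hsand := fun l => sandwich_sum (hw.1 l) (fun i => hbet l i)
      have hlow : wsum w1 ≤ wsum w :=
        finsum_le_finsum_aux (fun l => (hsand l).1) ((hw.2).subset (supp_inner w))
      have hup : wsum w ≤ wsum w1 + ∑ᶠ l, conjPart (w l) 0 := by
        have step1 : wsum w ≤ ∑ᶠ l, ((∑ᶠ i, w1 l i) + conjPart (w l) 0) := by
          apply finsum_le_finsum_aux (fun l => (hsand l).2)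
          apply ((hw1.2.union hw.2)).subset
          intro l hl
          simp only [Function.mem_support, Set.mem_union] at *
          by_contra hno
          push_neg at hno
          apply hl
          rw [hno.1, hno.2]
          have : (fun i => (0 : ℕ → ℕ) i) = (fun _ => (0:ℕ)) := rfl
          simp [conjPart]
        have step2 : ∑ᶠ l, ((∑ᶠ i, w1 l i) + conjPart (w l) 0) =
            wsum w1 + ∑ᶠ l, conjPart (w l) 0 := by
          exact finsum_add_distrib (hw1.2.subset (supp_inner w1))
            (hw.2.subset (supp_conj w hw))
        calc wsum w ≤ _ := step1
          _ = _ := step2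
      unfold wsum at *
      omega
  · rintro ⟨hcm, hA, hZ⟩
    have hZsum : ∑ᶠ l, conjPart (w l) 0 = ∑ l ∈ hw.2.toFinset, conjPart (w l) 0 := by
      apply finsum_eq_finset_sum_of_support_subset
      rw [Set.Finite.coe_toFinset]
      exact supp_conj w hw
    set d := psum (ptail r1) + 1 - psum (ptail r) with hd
    obtain ⟨g, hg1, hg2, hg3⟩ := exists_split hw.2.toFinset (fun l => conjPart (w l) 0) d
      (by rw [← hZsum]; omega)
    set w1 : Option F → ℕ → ℕ :=
      fun l i => if conjPart (w l) 0 - g l ≤ i then w l i - 1 else w l i with hw1def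
    have hdec := fun l => decrement (hw.1 l) (hg1 l)
    have hsupp : Function.support w1 ⊆ Function.support w := by
      intro l hl
      simp only [Function.mem_support] at *
      intro h0
      apply hl
      funext i
      show (if conjPart (w l) 0 - g l ≤ i then w l i - 1 else w l i) = 0
      rw [h0]
      simp
    have hweig : IsEigPartitions w1 := ⟨fun l => (hdec l).1, hw.2.subset hsupp⟩
    have hsum : wsum w = wsum w1 + d := by
      have h1 : wsum w = ∑ᶠ l, ((∑ᶠ i, w1 l i) + g l) :=
        finsum_congr fun l => (hdec l).2.2
      have h2 : ∑ᶠ l, ((∑ᶠ i, w1 l i) + g l) = wsum w1 + ∑ᶠ l, g l := by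
        apply finsum_add_distrib (hweig.2.subset (supp_inner w1))
        apply (hw.2.toFinset.finite_toSet).subset
        intro l hl
        simp only [Function.mem_support] at hl
        by_contra hno
        exact hl (hg2 l hno)
      have h3 : ∑ᶠ l, g l = d := by
        rw [finsum_eq_finset_sum_of_support_subset g (s := hw.2.toFinset)]
        · exact hg3
        · intro l hl
          simp only [Function.mem_support] at hl
          by_contra hno
          exact hl (hg2 l hno)
      rw [h1, h2, h3]
    refine ⟨w1, s, hweig, hs, fun l i => (hdec l).2.1 i, hcm, rfl, ?_⟩
    omega
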